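/- For a random variable X following the falling factorial distribution with parameter (n, θ), the variance of X equals θ·ℓ_n(θ) where ℓ_n(θ) = Σ_{i=1}^n (i-1)/(θ+i-1)^2. -/

import Mathlib

open MeasureTheory ProbabilityTheory Finset

noncomputable def ellFn (m : ℕ) (θ : ℝ) : ℝ := ∑ i ∈ Finset.Icc 1 m, ((i : ℝ) - 1) / (θ + i - 1) ^ 2
noncomputable def Lfn (m : ℕ) (θ : ℝ) : ℝ := ∑ i ∈ Finset.Icc 1 m, 1 / (θ + i - 1)
noncomputable def ffPMF (n : ℕ) (θ : ℝ) (x : ℕ) : ℝ :=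
  ((ascPochhammer ℕ n).coeff x : ℝ) * θ ^ x / (ascPochhammer ℝ n).eval θ

open Polynomial

set_option linter.unusedVariables false


lemma coeff_succ_zero (n : ℕ) :
    (ascPochhammer ℝ (n+1)).coeff 0 = (n : ℝ) * (ascPochhammer ℝ n).coeff 0 := by
  rw [ascPochhammer_succ_right, mul_add, coeff_add, coeff_mul_X_zero, ← C_eq_natCast,
    coeff_mul_C, zero_add, mul_comm]

lemma coeff_succ (n x : ℕ) :
    (ascPochhammer ℝ (n+1)).coeff (x+1)
      = (ascPochhammer ℝ n).coeff x + (n : ℝ) * (ascPochhammer ℝ n).coeff (x+1) := by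
  rw [ascPochhammer_succ_right, mul_add, coeff_add, coeff_mul_X, ← C_eq_natCast,
    coeff_mul_C, mul_comm]

lemma key_sum (n : ℕ) (θ : ℝ) (g : ℕ → ℝ) :
    ∑ x ∈ range (n+2), g x * (ascPochhammer ℝ (n+1)).coeff x * θ^x
    = θ * ∑ y ∈ range (n+1), g (y+1) * (ascPochhammer ℝ n).coeff y * θ^y
      + (n : ℝ) * ∑ x ∈ range (n+1), g x * (ascPochhammer ℝ n).coeff x * θ^x := by
  have h1 : ∑ x ∈ range (n+2), g x * (ascPochhammer ℝ (n+1)).coeff x * θ^x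
      = ∑ x ∈ range (n+2), (g x * ((ascPochhammer ℝ n * X).coeff x) * θ^x
          + (n:ℝ) * (g x * (ascPochhammer ℝ n).coeff x * θ^x)) := by
    refine Finset.sum_congr rfl fun x _ => ?_
    rcases x with _ | y
    · simp [coeff_succ_zero, coeff_mul_X_zero]; ring
    · rw [coeff_succ, coeff_mul_X]; ring
  rw [h1, Finset.sum_add_distrib, ← Finset.mul_sum]
  congr 1
  · have h2 := Finset.sum_range_succ' (fun x => g x * ((ascPochhammer ℝ n * X).coeff x) * θ^x) (n+1)
    rw [show n+2 = n+1+1 from rfl, h2]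
    simp only [coeff_mul_X, coeff_mul_X_zero, mul_zero, zero_mul, add_zero]
    rw [Finset.mul_sum]
    refine Finset.sum_congr rfl fun y _ => ?_
    rw [pow_succ]
    ring
  · congr 1
    rw [Finset.sum_range_succ]
    have : (ascPochhammer ℝ n).coeff (n+1) = 0 :=
      coeff_eq_zero_of_natDegree_lt (by rw [ascPochhammer_natDegree]; omega)
    simp [this]

lemma sum0 (n : ℕ) (θ : ℝ) :
    ∑ x ∈ range (n+1), (ascPochhammer ℝ n).coeff x * θ^x = (ascPochhammer ℝ n).eval θ := by
  rw [eval_eq_sum_range, ascPochhammer_natDegree]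

lemma evalpos (n : ℕ) {θ : ℝ} (hθ : 0 < θ) : 0 < (ascPochhammer ℝ n).eval θ :=
  ascPochhammer_pos n θ hθ

lemma denom_pos (n : ℕ) {θ : ℝ} (hθ : 0 < θ) : 0 < θ + (n:ℝ) := by positivity

lemma Lfn_succ (n : ℕ) (θ : ℝ) : Lfn (n+1) θ = Lfn n θ + 1/(θ + n) := by
  rw [Lfn, Lfn, Finset.sum_Icc_succ_top (by omega)]
  congr 1
  push_cast; ring

lemma ellFn_succ (n : ℕ) (θ : ℝ) : ellFn (n+1) θ = ellFn n θ + (n:ℝ)/(θ + n)^2 := by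
  rw [ellFn, ellFn, Finset.sum_Icc_succ_top (by omega)]
  congr 1
  push_cast; ring

lemma sumA (n : ℕ) {θ : ℝ} (hθ : 0 < θ) :
    ∑ x ∈ range (n+1), (x:ℝ) * (ascPochhammer ℝ n).coeff x * θ^x
      = θ * Lfn n θ * (ascPochhammer ℝ n).eval θ := by
  induction n with
  | zero => simp [Lfn]
  | succ n ih =>
    rw [key_sum n θ (fun x => (x:ℝ)), ascPochhammer_succ_eval, Lfn_succ]
    have hsplit : ∑ y ∈ range (n+1), ((y+1:ℕ):ℝ) * (ascPochhammer ℝ n).coeff y * θ^y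
        = (∑ y ∈ range (n+1), (y:ℝ) * (ascPochhammer ℝ n).coeff y * θ^y)
          + ∑ y ∈ range (n+1), (ascPochhammer ℝ n).coeff y * θ^y := by
      rw [← Finset.sum_add_distrib]
      refine Finset.sum_congr rfl fun y _ => ?_
      push_cast; ring
    rw [hsplit, ih, sum0]
    have hd : θ + (n:ℝ) ≠ 0 := ne_of_gt (denom_pos n hθ)
    field_simp
    ring

lemma sumB (n : ℕ) {θ : ℝ} (hθ : 0 < θ) :
    ∑ x ∈ range (n+1), (x:ℝ)^2 * (ascPochhammer ℝ n).coeff x * θ^x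
      = (ascPochhammer ℝ n).eval θ * (θ * ellFn n θ + θ^2 * (Lfn n θ)^2) := by
  induction n with
  | zero => simp [ellFn, Lfn]
  | succ n ih =>
    rw [key_sum n θ (fun x => (x:ℝ)^2), ascPochhammer_succ_eval, Lfn_succ, ellFn_succ]
    have hsplit : ∑ y ∈ range (n+1), ((y+1:ℕ):ℝ)^2 * (ascPochhammer ℝ n).coeff y * θ^y
        = (∑ y ∈ range (n+1), (y:ℝ)^2 * (ascPochhammer ℝ n).coeff y * θ^y)
          + (2 * ∑ y ∈ range (n+1), (y:ℝ) * (ascPochhammer ℝ n).coeff y * θ^y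
          + ∑ y ∈ range (n+1), (ascPochhammer ℝ n).coeff y * θ^y) := by
      rw [Finset.mul_sum, ← Finset.sum_add_distrib, ← Finset.sum_add_distrib]
      refine Finset.sum_congr rfl fun y _ => ?_
      push_cast; ring
    rw [hsplit, ih, sumA n hθ, sum0]
    have hd : θ + (n:ℝ) ≠ 0 := ne_of_gt (denom_pos n hθ)
    field_simp
    ring

lemma ffPMF_cast (n x : ℕ) : ((ascPochhammer ℕ n).coeff x : ℝ) = (ascPochhammer ℝ n).coeff x := by
  rw [← ascPochhammer_map (Nat.castRingHom ℝ) n, coeff_map]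
  simp

lemma ffPMF_nonneg (n : ℕ) {θ : ℝ} (hθ : 0 < θ) (x : ℕ) : 0 ≤ ffPMF n θ x := by
  have := evalpos n hθ
  unfold ffPMF
  positivity

lemma ffPMF_zero (n : ℕ) (θ : ℝ) {x : ℕ} (hx : n < x) : ffPMF n θ x = 0 := by
  unfold ffPMF
  rw [Polynomial.coeff_eq_zero_of_natDegree_lt (by rw [ascPochhammer_natDegree]; omega)]
  simp

lemma ffPMF_sum (n : ℕ) {θ : ℝ} (hθ : 0 < θ) : ∑ x ∈ range (n+1), ffPMF n θ x = 1 := by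
  unfold ffPMF
  rw [← Finset.sum_div]
  simp_rw [ffPMF_cast]
  rw [sum0, div_self (ne_of_gt (evalpos n hθ))]

lemma ffPMF_tsum (n : ℕ) {θ : ℝ} (hθ : 0 < θ) :
    ∑' x : ℕ, ENNReal.ofReal (ffPMF n θ x) = 1 := by
  rw [tsum_eq_sum (s := range (n+1)) (fun b hb => by
    rw [ffPMF_zero n θ (by simpa using hb), ENNReal.ofReal_zero]),
    ← ENNReal.ofReal_sum_of_nonneg (fun i _ => ffPMF_nonneg n hθ i), ffPMF_sum n hθ,
    ENNReal.ofReal_one]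

lemma nullmeas_of_add {Ω : Type*} [MeasurableSpace Ω] (μ : Measure Ω) [IsProbabilityMeasure μ]
    (S : Set Ω) (h : μ S + μ Sᶜ ≤ 1) : NullMeasurableSet S μ := by
  set T := toMeasurable μ S with hT
  set T' := toMeasurable μ Sᶜ with hT'
  have hu : μ (T ∪ T') = 1 := by
    have h1 : μ (T ∪ T') ≤ 1 := by
      have := measure_mono (μ := μ) (Set.subset_univ (T ∪ T'))
      simpa [measure_univ] using this
    refine le_antisymm h1 ?_
    have : (Set.univ : Set Ω) ⊆ T ∪ T' := by
      rw [← Set.union_compl_self S]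
      exact Set.union_subset_union (subset_toMeasurable μ S) (subset_toMeasurable μ Sᶜ)
    calc (1:ENNReal) = μ Set.univ := measure_univ.symm
    _ ≤ μ (T ∪ T') := measure_mono this
  have hkey : μ (T ∪ T') + μ (T ∩ T') ≤ 1 := by
    rw [measure_union_add_inter T (measurableSet_toMeasurable μ Sᶜ),
      measure_toMeasurable, measure_toMeasurable]
    exact h
  rw [hu] at hkey
  have hnull : μ (T ∩ T') = 0 := by
    by_contra hne
    have h0 : 0 < μ (T ∩ T') := pos_iff_ne_zero.mpr hne
    have : (1 : ENNReal) < 1 + μ (T ∩ T') := ENNReal.lt_add_right (by simp) hne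
    exact absurd (lt_of_lt_of_le this hkey) (lt_irrefl 1)
  have hTS : μ (T \ S) = 0 := by
    refine measure_mono_null ?_ hnull
    intro ω hω
    exact ⟨hω.1, subset_toMeasurable μ Sᶜ hω.2⟩
  have hae : S =ᵐ[μ] T := by
    rw [ae_eq_set]
    constructor
    · exact measure_mono_null (by intro ω hω; exact absurd (subset_toMeasurable μ S hω.1) hω.2) hnull
    · exact hTS
  exact ((measurableSet_toMeasurable μ S).nullMeasurableSet).congr hae.symm

theorem ff_variance (Ω : Type*) [MeasurableSpace Ω] (μ : Measure Ω) [IsProbabilityMeasure μ]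
    (X : Ω → ℕ) (n : ℕ) (θ : ℝ) (hn : 1 ≤ n) (hθ : 0 < θ)
    (hX : ∀ x : ℕ, μ {ω | X ω = x} = ENNReal.ofReal (ffPMF n θ x)) :
    variance (fun ω => (X ω : ℝ)) μ = θ * ellFn n θ := by
  have hμ : ∀ x : ℕ, μ (X ⁻¹' {x}) = ENNReal.ofReal (ffPMF n θ x) := hX
  -- Each fiber is null measurable
  have hNM : ∀ x : ℕ, NullMeasurableSet (X ⁻¹' {x}) μ := by
    intro x
    refine nullmeas_of_add μ _ ?_
    have hsub : (X ⁻¹' {x})ᶜ ⊆ ⋃ y : ℕ, (if y = x then (∅ : Set Ω) else X ⁻¹' {y}) := by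
      intro ω hω
      refine Set.mem_iUnion.mpr ⟨X ω, ?_⟩
      simp only [Set.mem_compl_iff, Set.mem_preimage, Set.mem_singleton_iff] at hω
      rw [if_neg hω]
      exact rfl
    have hle : μ (X ⁻¹' {x})ᶜ ≤ ∑' y : ℕ, (if y = x then 0 else ENNReal.ofReal (ffPMF n θ y)) := by
      refine (measure_mono hsub).trans ?_
      refine (measure_iUnion_le _).trans ?_
      refine ENNReal.tsum_le_tsum fun y => ?_
      split
      · simp
      · exact le_of_eq (hμ y)
    calc μ (X ⁻¹' {x}) + μ (X ⁻¹' {x})ᶜ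
        ≤ ENNReal.ofReal (ffPMF n θ x)
          + ∑' y : ℕ, (if y = x then 0 else ENNReal.ofReal (ffPMF n θ y)) := by
          exact add_le_add (le_of_eq (hμ x)) hle
      _ = ∑' y : ℕ, ENNReal.ofReal (ffPMF n θ y) := by
          rw [ENNReal.tsum_eq_add_tsum_ite (f := fun y => ENNReal.ofReal (ffPMF n θ y)) x]
          congr 1
          exact tsum_congr fun y => by by_cases h : y = x <;> simp [h]
      _ = 1 := ffPMF_tsum n hθ
  -- X is a.e. measurable
  have hnm : NullMeasurable X μ := by
    intro s _
    have hs : X ⁻¹' s = ⋃ y : s, X ⁻¹' {(y : ℕ)} := by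
      ext ω; simp
    rw [hs]
    exact NullMeasurableSet.iUnion fun y => hNM y
  have hae : AEMeasurable X μ := hnm.aemeasurable
  have haer : AEMeasurable (fun ω => (X ω : ℝ)) μ :=
    (Measurable.of_discrete (f := fun y : ℕ => (y : ℝ))).comp_aemeasurable hae
  -- X ≤ n a.e.
  have hbd : ∀ᵐ ω ∂μ, X ω ≤ n := by
    rw [ae_iff]
    have hsub2 : {a | ¬ X a ≤ n} ⊆ ⋃ y : ℕ, (if y ≤ n then (∅ : Set Ω) else X ⁻¹' {y}) := by
      intro ω hω
      simp only [Set.mem_setOf_eq, not_le] at hω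
      refine Set.mem_iUnion.mpr ⟨X ω, ?_⟩
      rw [if_neg (by omega)]
      exact rfl
    have hz : μ (⋃ y : ℕ, (if y ≤ n then (∅ : Set Ω) else X ⁻¹' {y})) = 0 := by
      refine le_antisymm ((measure_iUnion_le _).trans ?_) zero_le
      have hterm : ∀ y : ℕ, μ (if y ≤ n then (∅ : Set Ω) else X ⁻¹' {y}) = 0 := by
        intro y
        by_cases h : y ≤ n
        · simp [h]
        · rw [if_neg h, hμ y, ffPMF_zero n θ (by omega), ENNReal.ofReal_zero]
      simp [hterm]
    exact measure_mono_null hsub2 hz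
  -- pushforward measure
  set ν : Measure ℕ := μ.map X with hν
  have instν : IsProbabilityMeasure ν := Measure.isProbabilityMeasure_map hae
  have hνx : ∀ x : ℕ, ν {x} = ENNReal.ofReal (ffPMF n θ x) := fun x => by
    rw [hν, Measure.map_apply_of_aemeasurable hae (measurableSet_singleton x)]
    exact hμ x
  have hbdν : ∀ᵐ y ∂ν, y ≤ n := by
    rw [hν, ae_map_iff hae MeasurableSet.of_discrete]
    exact hbd
  -- generic integral computation
  have hint : ∀ g : ℕ → ℝ, (∫ ω, g (X ω) ∂μ)
      = ∑ y ∈ range (n+1), ffPMF n θ y * g y := by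
    intro g
    have hgi : Integrable g ν := by
      refine Integrable.mono' (integrable_const (∑ y ∈ range (n+1), ‖g y‖))
        Measurable.of_discrete.aestronglyMeasurable ?_
      refine hbdν.mono fun y hy => ?_
      exact Finset.single_le_sum (f := fun y => ‖g y‖) (fun i _ => norm_nonneg _)
        (by simp [Nat.lt_succ_iff, hy])
    rw [← integral_map hae Measurable.of_discrete.aestronglyMeasurable,
      integral_countable' hgi]
    rw [tsum_eq_sum (s := range (n+1)) (fun b hb => by
      rw [measureReal_def, hνx b, ffPMF_zero n θ (by simpa using hb), ENNReal.ofReal_zero]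
      simp)]
    refine Finset.sum_congr rfl fun y _ => ?_
    rw [measureReal_def, hνx y, ENNReal.toReal_ofReal (ffPMF_nonneg n hθ y), smul_eq_mul]
  have hf : (0:ℝ) < (ascPochhammer ℝ n).eval θ := evalpos n hθ
  -- first moment
  have hE1 : (∫ ω, (X ω : ℝ) ∂μ) = θ * Lfn n θ := by
    rw [hint (fun y => (y : ℝ))]
    have : ∑ y ∈ range (n+1), ffPMF n θ y * (y:ℝ)
        = (∑ y ∈ range (n+1), (y:ℝ) * (ascPochhammer ℝ n).coeff y * θ^y)
            / (ascPochhammer ℝ n).eval θ := by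
      rw [Finset.sum_div]
      refine Finset.sum_congr rfl fun y _ => ?_
      rw [ffPMF, ffPMF_cast]
      ring
    rw [this, sumA n hθ, mul_div_assoc, div_self (ne_of_gt hf), mul_one]
  -- second moment
  have hE2 : (∫ ω, (X ω : ℝ)^2 ∂μ) = θ * ellFn n θ + θ^2 * (Lfn n θ)^2 := by
    rw [hint (fun y => (y : ℝ)^2)]
    have : ∑ y ∈ range (n+1), ffPMF n θ y * (y:ℝ)^2
        = (∑ y ∈ range (n+1), (y:ℝ)^2 * (ascPochhammer ℝ n).coeff y * θ^y)
            / (ascPochhammer ℝ n).eval θ := by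
      rw [Finset.sum_div]
      refine Finset.sum_congr rfl fun y _ => ?_
      rw [ffPMF, ffPMF_cast]
      ring
    rw [this, sumB n hθ, mul_comm, mul_div_assoc, div_self (ne_of_gt hf), mul_one]
  -- memℒp
  have h2 : MemLp (fun ω => (X ω : ℝ)) 2 μ := by
    refine MemLp.of_bound haer.aestronglyMeasurable (n : ℝ) ?_
    refine hbd.mono fun ω hω => ?_
    rw [Real.norm_eq_abs, abs_of_nonneg (by positivity)]
    exact_mod_cast hω
  rw [variance_eq_sub h2]
  have hpow : (∫ ω, ((fun ω => (X ω : ℝ)) ^ 2) ω ∂μ) = ∫ ω, (X ω : ℝ)^2 ∂μ := by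
    refine integral_congr_ae (Filter.Eventually.of_forall fun ω => ?_)
    simp [Pi.pow_apply]
  rw [hpow, hE2, hE1]
  ring
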